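/- Let X be a measurable space and Y a type of labels. Let S and T' be probability measures on X, let H be a nonempty set of hypotheses h : X → Y, and let f_S, f_T, f_T̂ : X → Y be the source labeling function, target labeling function, and pseudo-labeling function. For a measure μ on X and functions f, g : X → Y write R_μ(f,g) := μ {x | f x ≠ g x} for the expected 0-1 risk. Define the combined error of the ideal joint hypothesis C := ⨅_{h ∈ H} (R_S(h, f_S) + R_{T'}(h, f_T)). Then C ≤ ⨅_{h ∈ H} (R_S(h, f_S) + R_{T'}(h, f_T̂)) + 2 · R_{T'}(f_S, f_T̂) + R_{T'}(f_T, f_T̂). -/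

import Mathlib

open MeasureTheory

/-- Expected 0-1 risk of `f` against `g` under measure `μ`:
the `μ`-measure of the disagreement set. -/
noncomputable def risk01 {X Y : Type*} [MeasurableSpace X]
    (μ : Measure X) (f g : X → Y) : ENNReal :=
  μ {x | f x ≠ g x}

lemma risk01_triangle {X Y : Type*} [MeasurableSpace X]
    (μ : Measure X) (f g k : X → Y) :
    risk01 μ f g ≤ risk01 μ f k + risk01 μ g k := by
  refine le_trans (measure_mono ?_) (measure_union_le _ _)
  intro x hx
  by_cases h : f x = k x
  · right; simp only [Set.mem_setOf_eq] at *; intro hgk; exact hx (h.trans hgk.symm)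
  · left; exact h

/-- Theorem 1 of the paper: the combined error of the ideal joint hypothesis
`C = ⨅ h ∈ H, R_S(h, f_S) + R_{T'}(h, f_T)` is bounded by
`⨅ h ∈ H, (R_S(h, f_S) + R_{T'}(h, f_T̂)) + 2 R_{T'}(f_S, f_T̂) + R_{T'}(f_T, f_T̂)`. -/
theorem ideal_joint_error_bound {X Y : Type*} [MeasurableSpace X]
    (S T' : Measure X) [IsProbabilityMeasure S] [IsProbabilityMeasure T']
    (H : Set (X → Y)) (hH : H.Nonempty)
    (fS fT fThat : X → Y) :
    (⨅ h ∈ H, risk01 S h fS + risk01 T' h fT) ≤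
      (⨅ h ∈ H, risk01 S h fS + risk01 T' h fThat)
        + 2 * risk01 T' fS fThat + risk01 T' fT fThat := by
  have key : (⨅ h ∈ H, risk01 S h fS + risk01 T' h fT) ≤
      (⨅ h ∈ H, risk01 S h fS + risk01 T' h fThat) + risk01 T' fT fThat := by
    rw [ENNReal.iInf_add]
    refine le_iInf fun h => ?_
    rw [ENNReal.iInf_add]
    refine le_iInf fun hh => ?_
    refine le_trans (iInf_le_of_le h (iInf_le_of_le hh ?_)) le_rfl
    have := risk01_triangle T' h fT fThat
    calc risk01 S h fS + risk01 T' h fT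
        ≤ risk01 S h fS + (risk01 T' h fThat + risk01 T' fT fThat) :=
          add_le_add le_rfl this
      _ = risk01 S h fS + risk01 T' h fThat + risk01 T' fT fThat := by ring
  calc (⨅ h ∈ H, risk01 S h fS + risk01 T' h fT)
      ≤ (⨅ h ∈ H, risk01 S h fS + risk01 T' h fThat) + risk01 T' fT fThat := key
    _ ≤ (⨅ h ∈ H, risk01 S h fS + risk01 T' h fThat)
        + 2 * risk01 T' fS fThat + risk01 T' fT fThat := by
        gcongr
        exact le_add_right le_rfl
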